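/- Let B be an n-dimensional Banach space with unit sphere S, and let A be a closed symmetric subset of S. Then the Krasnoselskii genus γ(A) equals the Lusternik–Schnirelmann subspace category of A/ℤ₂ in S/ℤ₂, where A/ℤ₂ denotes the image of A under the quotient identifying u with -u. -/

import Mathlib

open Set Metric Topology unitInterval

noncomputable section
open Classical

variable {B : Type*} [NormedAddCommGroup B] [NormedSpace ℝ B]

/-- There exists a continuous, odd, nonvanishing map `A → ℝ^m \ {0}`. -/
def HasOddMap (A : Set B) (m : ℕ) : Prop :=
  ∃ h : A → (Fin m → ℝ), Continuous h ∧ (∀ x, h x ≠ 0) ∧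
    ∀ (x : A) (hx : -(x : B) ∈ A), h ⟨-(x : B), hx⟩ = -h x

/-- Krasnoselskii genus. -/
def genus (A : Set B) : ℕ∞ :=
  if A = ∅ then 0 else sInf {m : ℕ∞ | ∃ k : ℕ, m = k ∧ HasOddMap A k}

/-- A set is contractible within the ambient space `Φ`. -/
def ContractibleIn {Φ : Type*} [TopologicalSpace Φ] (C : Set Φ) : Prop :=
  ∃ x₀ : Φ, ∃ H : C(↥C × ↥I, Φ),
    (∀ x : C, H (x, 0) = (x : Φ)) ∧ (∀ x : C, H (x, 1) = x₀)

/-- Lusternik–Schnirelmann subspace category (with closed covers). -/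
def catLS {Φ : Type*} [TopologicalSpace Φ] (A : Set Φ) : ℕ∞ :=
  sInf {m : ℕ∞ | ∃ k : ℕ, m = k ∧ ∃ C : Fin k → Set Φ,
    (∀ i, IsClosed (C i)) ∧ (∀ i, ContractibleIn (C i)) ∧ A ⊆ ⋃ i, C i}

/-- `X` can be brought to `Y` via a homotopy in `Φ` starting from the inclusion. -/
def BringsTo {Φ : Type*} [TopologicalSpace Φ] (X Y : Set Φ) : Prop :=
  ∃ H : C(↥X × ↥I, Φ),
    (∀ x : X, H (x, 0) = (x : Φ)) ∧ (∀ x : X, H (x, 1) ∈ Y)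

/-- `a` lies in the homotopy significant spectrum of `f`. -/
def HomotopySignificant {Φ : Type*} [TopologicalSpace Φ] (f : Φ → ℝ) (a : ℝ) : Prop :=
  ¬ BringsTo {x | f x ≤ a} {x | f x < a}

/-- `e` is a weak homotopy significant eigenvalue of `f`. -/
def WeakHomotopySignificant {Φ : Type*} [TopologicalSpace Φ] (f : Φ → ℝ) (e : ℝ) : Prop :=
  ∀ t₁ > e, ∀ t₂ < e, ¬ BringsTo {x | f x ≤ t₁} {x | f x ≤ t₂}

/-- The k-th Krasnoselskii eigenvalue of (the restriction to the unit sphere of) `f`. -/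
def kr (f : B → ℝ) (k : ℕ) : EReal :=
  ⨅ A ∈ {A : Set B | A ⊆ sphere (0 : B) 1 ∧ IsClosed A ∧ A = -A ∧ (k : ℕ∞) ≤ genus A},
    ⨆ x ∈ A, (f x : EReal)

/-- The k-th category (min-max) eigenvalue of `f`. -/
def hs {Φ : Type*} [TopologicalSpace Φ] (f : Φ → ℝ) (k : ℕ) : EReal :=
  ⨅ A ∈ {A : Set Φ | IsClosed A ∧ (k : ℕ∞) ≤ catLS A}, ⨆ x ∈ A, (f x : EReal)

/-- The antipodal setoid on the unit sphere of `B`. -/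
def projSetoid (B : Type*) [NormedAddCommGroup B] [NormedSpace ℝ B] :
    Setoid ↥(sphere (0 : B) 1) where
  r x y := (x : B) = y ∨ (x : B) = -(y : B)
  iseqv := by
    constructor
    · intro x; exact Or.inl rfl
    · rintro x y (h | h)
      · exact Or.inl h.symm
      · exact Or.inr (by rw [h, neg_neg])
    · rintro x y z (h | h) (h' | h')
      · exact Or.inl (h.trans h')
      · exact Or.inr (by rw [h, h'])
      · exact Or.inr (by rw [h, h'])
      · exact Or.inl (by rw [h, h', neg_neg])

/-- The projective space of `B`, as the quotient of the unit sphere by the antipodal map. -/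
def Proj (B : Type*) [NormedAddCommGroup B] [NormedSpace ℝ B] := Quotient (projSetoid B)

instance : TopologicalSpace (Proj B) := instTopologicalSpaceQuotient


set_option linter.unusedSectionVars false
set_option linter.unnecessarySimpa false
set_option maxHeartbeats 1000000

section Aux

variable [CompleteSpace B] [FiniteDimensional ℝ B]

/-- Negation on the unit sphere. -/
def negS : ↥(sphere (0 : B) 1) → ↥(sphere (0 : B) 1) :=
  fun x => ⟨-(x : B), by simpa using x.2⟩

lemma continuous_negS : Continuous (negS (B := B)) :=
  Continuous.subtype_mk (continuous_neg.comp continuous_subtype_val) _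

/-- The quotient map to projective space. -/
def projMk : ↥(sphere (0 : B) 1) → Proj B := Quotient.mk (projSetoid B)

lemma continuous_projMk : Continuous (projMk (B := B)) := continuous_quot_mk

lemma projMk_surjective : Function.Surjective (projMk (B := B)) :=
  Quotient.exists_rep

lemma projMk_eq_iff (x y : ↥(sphere (0 : B) 1)) :
    projMk x = projMk y ↔ ((x : B) = y ∨ (x : B) = -(y : B)) := by
  constructor
  · intro h; exact Quotient.exact h
  · intro h; exact Quotient.sound h

lemma projMk_negS (x : ↥(sphere (0 : B) 1)) : projMk (negS x) = projMk x :=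
  Quotient.sound (Or.inr rfl)

lemma isOpenMap_projMk : IsOpenMap (projMk (B := B)) := by
  intro U hU
  refine (isOpen_coinduced (f := Quotient.mk (projSetoid B))).2 ?_
  have : Quotient.mk (projSetoid B) ⁻¹' (projMk '' U) = U ∪ negS ⁻¹' U := by
    ext x
    simp only [Set.mem_preimage, Set.mem_image, Set.mem_union]
    constructor
    · rintro ⟨y, hy, hxy⟩
      rcases (projMk_eq_iff y x).1 hxy with h | h
      · left; have : y = x := Subtype.ext h; rwa [← this]
      · right
        have : y = negS x := Subtype.ext h
        rwa [← this]
    · rintro (h | h)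
      · exact ⟨x, h, rfl⟩
      · exact ⟨negS x, h, projMk_negS x⟩
  refine (congrArg IsOpen this).mpr ?_
  exact hU.union (continuous_negS.isOpen_preimage U hU)

lemma isOpenQuotientMap_projMk : IsOpenQuotientMap (projMk (B := B)) :=
  ⟨projMk_surjective, continuous_projMk, isOpenMap_projMk⟩

lemma dmin_neg_right (x y : B) :
    min ‖x - -y‖ ‖x + -y‖ = min ‖x - y‖ ‖x + y‖ := by
  rw [sub_neg_eq_add, ← sub_eq_add_neg, min_comm]

/-- Quotient distance on projective space. -/
def dP : Proj B → Proj B → ℝ :=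
  Quotient.lift₂ (fun x y => min ‖(x : B) - y‖ ‖(x : B) + y‖) (by
    have key : ∀ u v : B, min ‖-u - v‖ ‖-u + v‖ = min ‖u - v‖ ‖u + v‖ := by
      intro u v
      rw [show -u - v = -(u + v) by abel, show -u + v = -(u - v) by abel,
        norm_neg, norm_neg, min_comm]
    rintro a b a' b' (h | h) (h' | h') <;> simp only [h, h']
    · rw [dmin_neg_right]
    · rw [key]
    · rw [key, dmin_neg_right]
    )

lemma dP_mk (x y : ↥(sphere (0 : B) 1)) :
    dP (projMk x) (projMk y) = min ‖(x : B) - y‖ ‖(x : B) + y‖ := rfl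

lemma continuous_dP : Continuous (fun p : Proj B × Proj B => dP p.1 p.2) := by
  apply ((isOpenQuotientMap_projMk (B := B)).prodMap
    (isOpenQuotientMap_projMk (B := B))).isQuotientMap.continuous_iff.2
  show Continuous fun z : ↥(sphere (0:B) 1) × ↥(sphere (0:B) 1) =>
    min ‖(z.1 : B) - z.2‖ ‖(z.1 : B) + z.2‖
  apply Continuous.min
  · exact ((continuous_subtype_val.comp continuous_fst).sub
      (continuous_subtype_val.comp continuous_snd)).norm
  · exact ((continuous_subtype_val.comp continuous_fst).add
      (continuous_subtype_val.comp continuous_snd)).norm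

lemma dP_self (p : Proj B) : dP p p = 0 := by
  obtain ⟨x, rfl⟩ := projMk_surjective p
  rw [dP_mk]
  simp [min_eq_left (by positivity : (0:ℝ) ≤ ‖(x:B) + x‖)]

lemma dP_nonneg (p q : Proj B) : 0 ≤ dP p q := by
  obtain ⟨x, rfl⟩ := projMk_surjective p
  obtain ⟨y, rfl⟩ := projMk_surjective q
  rw [dP_mk]
  positivity

lemma eq_of_dP_eq_zero {p q : Proj B} (h : dP p q = 0) : p = q := by
  obtain ⟨x, rfl⟩ := projMk_surjective p
  obtain ⟨y, rfl⟩ := projMk_surjective q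
  rw [dP_mk] at h
  rcases min_eq_iff.1 h with ⟨h1, _⟩ | ⟨h1, _⟩
  · exact (projMk_eq_iff x y).2 (Or.inl (by rwa [norm_sub_eq_zero_iff] at h1))
  · refine (projMk_eq_iff x y).2 (Or.inr ?_)
    rw [← sub_neg_eq_add, norm_sub_eq_zero_iff] at h1
    exact h1

lemma dP_pos {p q : Proj B} (h : p ≠ q) : 0 < dP p q :=
  lt_of_le_of_ne (dP_nonneg p q) (fun h0 => h (eq_of_dP_eq_zero h0.symm))

instance : T2Space (Proj B) := by
  constructor
  intro p q hpq
  have hc : Continuous (dP p) :=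
    continuous_dP.comp (continuous_const.prodMk continuous_id)
  refine ⟨dP p ⁻¹' Set.Iio (dP p q / 2), dP p ⁻¹' Set.Ioi (dP p q / 2),
    hc.isOpen_preimage _ isOpen_Iio, hc.isOpen_preimage _ isOpen_Ioi, ?_, ?_, ?_⟩
  · simp only [Set.mem_preimage, Set.mem_Iio, dP_self]
    exact half_pos (dP_pos hpq)
  · simp only [Set.mem_preimage, Set.mem_Ioi]
    exact half_lt_self (dP_pos hpq)
  · apply Set.disjoint_left.2
    intro r hr hr'
    simp only [Set.mem_preimage, Set.mem_Iio, Set.mem_Ioi] at hr hr'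
    exact absurd (hr'.trans hr) (lt_irrefl _)

instance : CompactSpace ↥(sphere (0 : B) 1) :=
  isCompact_iff_compactSpace.mp (isCompact_sphere 0 1)

instance : CompactSpace (Proj B) := by
  constructor
  have : (Set.univ : Set (Proj B)) = projMk '' Set.univ := by
    rw [Set.image_univ, (projMk_surjective (B := B)).range_eq]
  rw [this]
  exact (isCompact_univ).image continuous_projMk


lemma exists_lift_dP (x : ↥(sphere (0 : B) 1)) (p : Proj B) :
    ∃ y, projMk y = p ∧ ‖(x : B) - y‖ = dP (projMk x) p := by
  obtain ⟨z, rfl⟩ := projMk_surjective p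
  rw [dP_mk]
  rcases min_cases ‖(x : B) - z‖ ‖(x : B) + z‖ with ⟨h, _⟩ | ⟨h, _⟩
  · exact ⟨z, rfl, h.symm⟩
  · refine ⟨negS z, projMk_negS z, ?_⟩
    rw [h]
    show ‖(x : B) - -(z : B)‖ = _
    rw [sub_neg_eq_add]

lemma fiber_cases {y y' : ↥(sphere (0 : B) 1)} (h : projMk y = projMk y') :
    y = y' ∨ (y : B) = -(y' : B) := by
  rcases (projMk_eq_iff y y').1 h with h' | h'
  · exact Or.inl (Subtype.ext h')
  · exact Or.inr h'

lemma norm_sub_of_antipodal {y y' : ↥(sphere (0 : B) 1)} (h : (y : B) = -(y' : B)) :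
    ‖(y : B) - y'‖ = 2 := by
  have hy' : ‖(y' : B)‖ = 1 := by simpa using y'.2
  rw [h, show -(y' : B) - y' = -((2 : ℝ) • (y' : B)) by rw [two_smul]; abel,
    norm_neg, norm_smul, hy']
  norm_num

/-- One step of lifting a homotopy through the double cover. -/
lemma lift_step {Q : Set (Proj B)} (f g : ↥Q → Proj B) (hf : Continuous f)
    (F : ↥Q → ↥(sphere (0 : B) 1)) (hF : Continuous F)
    (hπF : ∀ q, projMk (F q) = g q)
    (hclose : ∀ q, dP (g q) (f q) < 4⁻¹) :
    ∃ F' : ↥Q → ↥(sphere (0 : B) 1), Continuous F' ∧ ∀ q, projMk (F' q) = f q := by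
  have hsel : ∀ q, ∃ y, projMk y = f q ∧ ‖(F q : B) - y‖ < 4⁻¹ := by
    intro q
    obtain ⟨y, hy1, hy2⟩ := exists_lift_dP (F q) (f q)
    exact ⟨y, hy1, by rw [hy2, hπF]; exact hclose q⟩
  choose F' hπ' hd' using hsel
  refine ⟨F', ?_, hπ'⟩
  rw [continuous_iff_continuousAt]
  intro q₀
  rw [Metric.continuousAt_iff']
  intro ε hε
  set ε' : ℝ := min ε 8⁻¹ with hε'def
  have hε' : 0 < ε' := lt_min hε (by norm_num)
  have h1 : ∀ᶠ q in nhds q₀, dist (F q) (F q₀) < ε' :=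
    Metric.continuousAt_iff'.1 hF.continuousAt ε' hε'
  have h2 : ∀ᶠ q in nhds q₀, dP (f q₀) (f q) < ε' := by
    have hc : Continuous fun q => dP (f q₀) (f q) :=
      continuous_dP.comp (continuous_const.prodMk hf)
    have ht := hc.continuousAt (x := q₀)
    rw [ContinuousAt, dP_self] at ht
    exact ht (Iio_mem_nhds hε')
  filter_upwards [h1, h2] with q hq1 hq2
  obtain ⟨z, hz1, hz2⟩ := exists_lift_dP (F' q₀) (f q)
  have hz3 : ‖(F' q₀ : B) - z‖ < ε' := by rw [hz2, hπ']; exact hq2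
  have hzF : z = F' q :=  by
    rcases fiber_cases (hz1.trans (hπ' q).symm) with h | h
    · exact h
    · exfalso
      have h2eq : ‖(z : B) - F' q‖ = 2 := norm_sub_of_antipodal h
      have hb : ‖(z : B) - F' q‖ ≤ ‖(z : B) - F' q₀‖ + ‖(F' q₀ : B) - F q₀‖
          + ‖(F q₀ : B) - F q‖ + ‖(F q : B) - F' q‖ := by
        calc ‖(z : B) - F' q‖
            = ‖(((z : B) - F' q₀) + ((F' q₀ : B) - F q₀)) + (((F q₀ : B) - F q)
              + ((F q : B) - F' q))‖ := by congr 1; abel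
          _ ≤ ‖((z : B) - F' q₀) + ((F' q₀ : B) - F q₀)‖
              + ‖((F q₀ : B) - F q) + ((F q : B) - F' q)‖ := norm_add_le _ _
          _ ≤ (‖(z : B) - F' q₀‖ + ‖(F' q₀ : B) - F q₀‖)
              + (‖(F q₀ : B) - F q‖ + ‖(F q : B) - F' q‖) := by
                gcongr <;> exact norm_add_le _ _
          _ = _ := by ring
      have e1 : ‖(z : B) - F' q₀‖ < ε' := by rwa [norm_sub_rev]
      have e2 : ‖(F' q₀ : B) - F q₀‖ < 4⁻¹ := by rw [norm_sub_rev]; exact hd' q₀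
      have e3 : ‖(F q₀ : B) - F q‖ < ε' := by
        rw [← dist_eq_norm, ← Subtype.dist_eq, dist_comm]; exact hq1
      have e4 : ‖(F q : B) - F' q‖ < 4⁻¹ := hd' q
      have hεsmall : ε' ≤ 8⁻¹ := min_le_right _ _
      nlinarith [hb, h2eq]
  rw [← hzF, Subtype.dist_eq, dist_eq_norm, norm_sub_rev]
  exact lt_of_lt_of_le hz3 (min_le_left _ _)

/-- A closed set contractible in `Proj B` admits a continuous section of the
double cover. -/
lemma exists_section {Q : Set (Proj B)} (hQ : IsClosed Q) (hcon : ContractibleIn Q) :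
    ∃ s : ↥Q → ↥(sphere (0 : B) 1), Continuous s ∧ ∀ q, projMk (s q) = (q : Proj B) := by
  obtain ⟨x₀, H, h0, h1⟩ := hcon
  haveI : CompactSpace ↥Q := isCompact_iff_compactSpace.mp hQ.isCompact
  -- uniform continuity in time
  obtain ⟨δ, hδpos, hδ⟩ : ∃ δ > 0, ∀ (q : ↥Q) (t t' : ↥I),
      |(t : ℝ) - t'| < δ → dP (H (q, t)) (H (q, t')) < 4⁻¹ := by
    set φ : (↥Q × ↥I) × ↥I → ℝ := fun z => dP (H (z.1.1, z.1.2)) (H (z.1.1, z.2)) with hφdef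
    have hφ : Continuous φ :=
      continuous_dP.comp ((H.continuous.comp (continuous_fst.fst.prodMk
        continuous_fst.snd)).prodMk (H.continuous.comp (continuous_fst.fst.prodMk
        continuous_snd)))
    set K : Set ((↥Q × ↥I) × ↥I) := {z | 4⁻¹ ≤ φ z} with hKdef
    have hKc : IsClosed K := isClosed_le continuous_const hφ
    rcases K.eq_empty_or_nonempty with hK | hK
    · refine ⟨1, one_pos, fun q t t' _ => ?_⟩
      by_contra hcon'
      have : ((q, t), t') ∈ K := not_lt.1 hcon'
      rw [hK] at this
      exact this
    · have hKcp : IsCompact K := hKc.isCompact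
      have hψ : ContinuousOn (fun z : (↥Q × ↥I) × ↥I => |(z.1.2 : ℝ) - z.2|) K :=
        (((continuous_subtype_val.comp continuous_fst.snd).sub
          (continuous_subtype_val.comp continuous_snd)).abs).continuousOn
      obtain ⟨z₀, hz₀K, hz₀min⟩ := hKcp.exists_isMinOn hK hψ
      refine ⟨|(z₀.1.2 : ℝ) - z₀.2|, ?_, ?_⟩
      · rcases lt_or_eq_of_le (abs_nonneg ((z₀.1.2 : ℝ) - z₀.2)) with h | h
        · exact h
        · exfalso
          have : (z₀.1.2 : ℝ) = z₀.2 := by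
            have := h.symm
            rw [abs_eq_zero, sub_eq_zero] at this
            exact this
          have heq : z₀.1.2 = z₀.2 := Subtype.ext this
          have : (4 : ℝ)⁻¹ ≤ φ z₀ := hz₀K
          rw [hφdef] at this
          simp only at this
          rw [heq, dP_self] at this
          norm_num at this
      · intro q t t' hlt
        by_contra hcon'
        have hmem : ((q, t), t') ∈ K := not_lt.1 hcon'
        have := hz₀min hmem
        simp only at this
        exact absurd (lt_of_le_of_lt this hlt) (lt_irrefl _)
  obtain ⟨N, hN⟩ := exists_nat_one_div_lt hδpos
  -- time grid
  set tg : ℕ → ↥I := fun j => ⟨min ((j : ℝ) / (N + 1)) 1,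
    le_min (by positivity) zero_le_one, min_le_right _ _⟩ with htg
  have htg0 : tg 0 = 0 := by
    apply Subtype.ext
    simp [htg]
  have htgtop : tg (N + 1) = 1 := by
    apply Subtype.ext
    simp only [htg]
    rw [show ((N + 1 : ℕ) : ℝ) = (N : ℝ) + 1 by push_cast; ring,
      div_self (by positivity : ((N : ℝ) + 1) ≠ 0), min_self]
    rfl
  have htgval : ∀ j, j ≤ N + 1 → (tg j : ℝ) = (j : ℝ) / (N + 1) := by
    intro j hj
    simp only [htg]
    rw [min_eq_left]
    rw [div_le_one (by positivity)]
    calc (j : ℝ) ≤ ((N + 1 : ℕ) : ℝ) := by exact_mod_cast hj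
      _ = (N : ℝ) + 1 := by push_cast; ring
  have hstep : ∀ j, j + 1 ≤ N + 1 → |(tg (j+1) : ℝ) - tg j| < δ := by
    intro j hj
    rw [htgval _ hj, htgval _ (le_trans (Nat.le_succ j) hj)]
    have : ((j:ℝ)+1) / (N + 1) - (j : ℝ) / (N + 1) = 1 / (N+1) := by
      field_simp; ring
    push_cast
    rw [this, abs_of_pos (by positivity)]
    exact hN
  -- downward induction
  have main : ∀ m, m ≤ N + 1 → ∃ F : ↥Q → ↥(sphere (0 : B) 1),
      Continuous F ∧ ∀ q, projMk (F q) = H (q, tg (N + 1 - m)) := by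
    intro m
    induction m with
    | zero =>
      intro _
      obtain ⟨y₀, hy₀⟩ := projMk_surjective (B := B) x₀
      refine ⟨fun _ => y₀, continuous_const, fun q => ?_⟩
      rw [Nat.sub_zero, htgtop, hy₀, h1 q]
    | succ m ih =>
      intro hm
      obtain ⟨F, hFc, hFπ⟩ := ih (le_trans (Nat.le_succ m) hm)
      set j : ℕ := N + 1 - (m + 1) with hj
      have hjm : N + 1 - m = j + 1 := by omega
      have hj1 : j + 1 ≤ N + 1 := by omega
      obtain ⟨F', hF'c, hF'π⟩ := lift_step (f := fun q => H (q, tg j))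
        (g := fun q => H (q, tg (j+1)))
        (H.continuous.comp (continuous_id.prodMk continuous_const)) F hFc
        (fun q => by rw [hFπ, hjm]) (fun q => hδ q _ _ (hstep j hj1))
      exact ⟨F', hF'c, hF'π⟩
  obtain ⟨F, hFc, hFπ⟩ := main (N + 1) (le_refl _)
  refine ⟨F, hFc, fun q => ?_⟩
  rw [hFπ q, Nat.sub_self, htg0, h0]
/-- Negation preserves membership of symmetric sets. -/
lemma neg_mem_of_symm {A : Set B} (hsymm : A = -A) {v : B} (hv : v ∈ A) : -v ∈ A := by
  rw [hsymm, Set.mem_neg, neg_neg]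
  exact hv

/-- A point of the unit sphere is not its own negation. -/
lemma sphere_ne_neg_self (x : ↥(sphere (0 : B) 1)) : ((x : B)) ≠ -((x : B)) := by
  intro h
  have h2 : (2 : ℝ) • ((x : B)) = 0 := by
    rw [two_smul, ← eq_neg_iff_add_eq_zero]
    exact h
  rcases smul_eq_zero.1 h2 with h' | h'
  · norm_num at h'
  · have hm : ‖(x : B)‖ = 1 := by simpa using x.2
    rw [h'] at hm
    simp at hm

/-- From a closed contractible-in-`Proj B` cover of `A/ℤ₂`, build an odd map. -/
lemma hasOddMap_of_cover (A : Set B) (hAS : A ⊆ sphere (0 : B) 1) (hA : IsClosed A)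
    (hsymm : A = -A) (k : ℕ) (C : Fin k → Set (Proj B)) (hCc : ∀ i, IsClosed (C i))
    (hCcon : ∀ i, ContractibleIn (C i))
    (hcover : {p : Proj B | ∃ x : ↥(sphere (0 : B) 1), (x : B) ∈ A ∧
      Quotient.mk (projSetoid B) x = p} ⊆ ⋃ i, C i) :
    HasOddMap A k := by
  classical
  -- sections over each covering set
  have hsec : ∀ i, ∃ s : ↥(C i) → ↥(sphere (0 : B) 1),
      Continuous s ∧ ∀ q, projMk (s q) = (q : Proj B) :=
    fun i => exists_section (hCc i) (hCcon i)
  choose s hs_cont hs_sec using hsec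
  -- preimages
  set E : Fin k → Set ↥(sphere (0 : B) 1) := fun i => projMk ⁻¹' (C i) with hE
  have hEc : ∀ i, IsClosed (E i) := fun i => (hCc i).preimage continuous_projMk
  have hEneg : ∀ i (x : ↥(sphere (0 : B) 1)), x ∈ E i → negS x ∈ E i := by
    intro i x hx
    simp only [hE, Set.mem_preimage] at hx ⊢
    rwa [projMk_negS]
  -- retraction to the chosen section
  set r : ∀ i, ↥(E i) → ↥(sphere (0 : B) 1) :=
    fun i x => s i ⟨projMk (x : ↥(sphere (0 : B) 1)), x.2⟩ with hr
  have hr_cont : ∀ i, Continuous (r i) := fun i =>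
    (hs_cont i).comp ((continuous_projMk.comp continuous_subtype_val).subtype_mk _)
  have hr_proj : ∀ i (x : ↥(E i)), projMk (r i x) = projMk (x : ↥(sphere (0 : B) 1)) :=
    fun i x => hs_sec i _
  have hr_cases : ∀ i (x : ↥(E i)),
      (x : ↥(sphere (0 : B) 1)) = r i x ∨ ((x : ↥(sphere (0 : B) 1)) : B) = -(r i x : B) :=
    fun i x => fiber_cases (hr_proj i x).symm
  have hr_not_both : ∀ i (x : ↥(E i)),
      ¬((x : ↥(sphere (0 : B) 1)) = r i x ∧ ((x : ↥(sphere (0 : B) 1)) : B) = -(r i x : B)) := by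
    rintro i x ⟨h1, h2⟩
    rw [h1] at h2
    exact sphere_ne_neg_self (r i x) h2
  -- sign function
  set sg : ∀ i, ↥(E i) → ℝ :=
    fun i x => if (x : ↥(sphere (0 : B) 1)) = r i x then 1 else -1 with hsg
  have hsg_cases : ∀ i x, (sg i x = 1 ∧ (x : ↥(sphere (0 : B) 1)) = r i x) ∨
      (sg i x = -1 ∧ ((x : ↥(sphere (0 : B) 1)) : B) = -(r i x : B)) := by
    intro i x
    by_cases h : (x : ↥(sphere (0 : B) 1)) = r i x
    · exact Or.inl ⟨if_pos h, h⟩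
    · refine Or.inr ⟨if_neg h, ?_⟩
      rcases hr_cases i x with h' | h'
      · exact absurd h' h
      · exact h'
  have hsg_cont : ∀ i, Continuous (sg i) := by
    intro i
    set P : Set ↥(E i) := {x | (x : ↥(sphere (0 : B) 1)) = r i x} with hP
    set Nn : Set ↥(E i) :=
      {x | ((x : ↥(sphere (0 : B) 1)) : B) = -(r i x : B)} with hNn
    have hPc : IsClosed P := isClosed_eq continuous_subtype_val (hr_cont i)
    have hNc : IsClosed Nn := isClosed_eq (continuous_subtype_val.comp continuous_subtype_val)
      ((continuous_subtype_val.comp (hr_cont i)).neg)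
    rw [continuous_iff_continuousAt]
    intro x
    rcases hr_cases i x with hx | hx
    · have hnb : Nnᶜ ∈ nhds x := hNc.isOpen_compl.mem_nhds (by
        intro hmem
        exact hr_not_both i x ⟨hx, hmem⟩)
      have hev : sg i =ᶠ[nhds x] fun _ => (1 : ℝ) := by
        filter_upwards [hnb] with y hy
        rcases hr_cases i y with h | h
        · simp [hsg, h]
        · exact absurd h hy
      exact ContinuousAt.congr (continuousAt_const) hev.symm
    · have hnb : Pᶜ ∈ nhds x := hPc.isOpen_compl.mem_nhds (by
        intro hmem
        exact hr_not_both i x ⟨hmem, hx⟩)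
      have hev : sg i =ᶠ[nhds x] fun _ => (-1 : ℝ) := by
        filter_upwards [hnb] with y hy
        simp only [hsg]
        rw [if_neg (show ¬((y : ↥(sphere (0 : B) 1)) = r i y) from hy)]
      exact ContinuousAt.congr (continuousAt_const) hev.symm
  have hsg_abs : ∀ i x, sg i x = 1 ∨ sg i x = -1 := by
    intro i x
    rcases hsg_cases i x with ⟨h, _⟩ | ⟨h, _⟩
    · exact Or.inl h
    · exact Or.inr h
  -- oddness of sign
  have hsg_odd : ∀ i (x : ↥(E i)) (hnx : negS (x : ↥(sphere (0 : B) 1)) ∈ E i),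
      sg i ⟨negS (x : ↥(sphere (0 : B) 1)), hnx⟩ = -sg i x := by
    intro i x hnx
    set x' : ↥(E i) := ⟨negS (x : ↥(sphere (0 : B) 1)), hnx⟩ with hx'
    have hrn : (r i x' : B) = (r i x : B) := by
      have : r i x' = r i x := by
        simp only [hr]
        congr 1
        exact Subtype.ext (projMk_negS _)
      rw [this]
    have hx'val : ((x' : ↥(sphere (0 : B) 1)) : B) = -((x : ↥(sphere (0 : B) 1)) : B) := rfl
    rcases hsg_cases i x with ⟨h1, h2⟩ | ⟨h1, h2⟩
    · rw [h1]
      rcases hsg_cases i x' with ⟨h3, h4⟩ | ⟨h3, _⟩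
      · exfalso
        have h4' : ((x' : ↥(sphere (0 : B) 1)) : B) = (r i x' : B) := by rw [h4]
        rw [hx'val, hrn, ← congrArg (Subtype.val) h2] at h4'
        exact sphere_ne_neg_self (x : ↥(sphere (0 : B) 1)) h4'.symm
      · exact h3
    · rw [h1, neg_neg]
      rcases hsg_cases i x' with ⟨h3, _⟩ | ⟨h3, h4⟩
      · exact h3
      · exfalso
        rw [hx'val, hrn, neg_inj] at h4
        rw [h4] at h2
        exact sphere_ne_neg_self (r i x) h2
  -- the sphere-level trace of A
  set AS : Set ↥(sphere (0 : B) 1) := Subtype.val ⁻¹' A with hASdef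
  have hASc : IsClosed AS := hA.preimage continuous_subtype_val
  haveI : NormalSpace ↥AS := by infer_instance
  set negAS : ↥AS → ↥AS := fun y => ⟨negS (y : ↥(sphere (0 : B) 1)), by
    show ((negS (y : ↥(sphere (0 : B) 1)) : ↥(sphere (0 : B) 1)) : B) ∈ A
    exact neg_mem_of_symm hsymm y.2⟩ with hnegAS
  have hnegAS_cont : Continuous negAS :=
    ((continuous_negS.comp continuous_subtype_val).subtype_mk _)
  have hnegAS_inv : ∀ y, negAS (negAS y) = y := by
    intro y
    apply Subtype.ext
    apply Subtype.ext
    show -(-((y : ↥(sphere (0 : B) 1)) : B)) = _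
    rw [neg_neg]
  -- extend the signs
  set K : Fin k → Set ↥AS := fun i => (fun y : ↥AS => (y : ↥(sphere (0 : B) 1))) ⁻¹' E i
    with hK
  have hKc : ∀ i, IsClosed (K i) := fun i => (hEc i).preimage continuous_subtype_val
  have hψ : ∀ i, ∃ g : C(↥AS, ℝ), ∀ z : ↥(K i),
      g (z : ↥AS) = sg i ⟨((z : ↥AS) : ↥(sphere (0 : B) 1)), z.2⟩ := by
    intro i
    set ψ : C(↥(K i), ℝ) := ⟨fun z => sg i ⟨((z : ↥AS) : ↥(sphere (0 : B) 1)), z.2⟩,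
      (hsg_cont i).comp ((continuous_subtype_val.comp continuous_subtype_val).subtype_mk _)⟩
    obtain ⟨g, hg⟩ := ψ.exists_restrict_eq (hKc i)
    exact ⟨g, fun z => by
      have := congrFun (congrArg DFunLike.coe hg) z
      exact this⟩
  choose g hg using hψ
  -- odd extensions
  set f : Fin k → ↥AS → ℝ := fun i y => (g i y - g i (negAS y)) / 2 with hf
  have hf_cont : ∀ i, Continuous (f i) :=
    fun i => (((g i).continuous).sub ((g i).continuous.comp hnegAS_cont)).div_const 2
  have hf_odd : ∀ i y, f i (negAS y) = -f i y := by
    intro i y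
    simp only [hf]
    rw [hnegAS_inv]
    ring
  have hKneg : ∀ i (y : ↥AS), y ∈ K i → negAS y ∈ K i := by
    intro i y hy
    exact hEneg i _ hy
  have hf_val : ∀ i (y : ↥AS) (hy : y ∈ K i),
      f i y = sg i ⟨(y : ↥(sphere (0 : B) 1)), hy⟩ := by
    intro i y hy
    have h1 := hg i ⟨y, hy⟩
    have h2 := hg i ⟨negAS y, hKneg i y hy⟩
    simp only [hf]
    rw [h1, h2]
    have : sg i ⟨((negAS y : ↥AS) : ↥(sphere (0 : B) 1)), (hKneg i y hy : _)⟩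
        = -sg i ⟨(y : ↥(sphere (0 : B) 1)), hy⟩ := by
      exact hsg_odd i ⟨(y : ↥(sphere (0 : B) 1)), hy⟩ (hKneg i y hy)
    rw [this]
    ring
  -- assemble
  set toAS : ↥A → ↥AS := fun a => ⟨⟨(a : B), hAS a.2⟩, a.2⟩ with htoAS
  have htoAS_cont : Continuous toAS :=
    ((continuous_subtype_val.subtype_mk _).subtype_mk _)
  refine ⟨fun a i => f i (toAS a), ?_, ?_, ?_⟩
  · exact continuous_pi fun i => (hf_cont i).comp htoAS_cont
  · intro a h0
    have hmem : projMk ((toAS a : ↥AS) : ↥(sphere (0 : B) 1)) ∈ ⋃ i, C i := by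
      apply hcover
      exact ⟨((toAS a : ↥AS) : ↥(sphere (0 : B) 1)), a.2, rfl⟩
    obtain ⟨i, hi⟩ := Set.mem_iUnion.1 hmem
    have hKi : toAS a ∈ K i := hi
    have hzero : f i (toAS a) = 0 := congrFun h0 i
    rw [hf_val i _ hKi] at hzero
    rcases hsg_abs i ⟨_, hKi⟩ with h | h <;> rw [h] at hzero <;> norm_num at hzero
  · intro a hx
    funext i
    show f i (toAS ⟨-(a : B), hx⟩) = -f i (toAS a)
    have : toAS ⟨-(a : B), hx⟩ = negAS (toAS a) := by
      apply Subtype.ext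
      apply Subtype.ext
      rfl
    rw [this, hf_odd]
/-- The empty set is contractible in a nonempty space. -/
lemma contractibleIn_empty {Φ : Type*} [TopologicalSpace Φ] (hΦ : Nonempty Φ) :
    ContractibleIn (∅ : Set Φ) := by
  obtain ⟨p⟩ := hΦ
  refine ⟨p, ⟨fun _ => p, continuous_const⟩, ?_, ?_⟩ <;>
    exact fun x => absurd x.2 (Set.notMem_empty _)

/-- From an odd map, build a closed contractible-in-`Proj B` cover of `A/ℤ₂`. -/
lemma cover_of_hasOddMap (A : Set B) (hAS : A ⊆ sphere (0 : B) 1) (hA : IsClosed A)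
    (hsymm : A = -A) (hne : A.Nonempty) (k : ℕ) (hodd : HasOddMap A k) :
    ∃ C : Fin k → Set (Proj B), (∀ i, IsClosed (C i)) ∧ (∀ i, ContractibleIn (C i)) ∧
      {p : Proj B | ∃ x : ↥(sphere (0 : B) 1), (x : B) ∈ A ∧
        Quotient.mk (projSetoid B) x = p} ⊆ ⋃ i, C i := by
  classical
  obtain ⟨h, hc, hne0, hoddp⟩ := hodd
  have hProjNe : Nonempty (Proj B) := by
    obtain ⟨v, hv⟩ := hne
    exact ⟨projMk ⟨v, hAS hv⟩⟩
  set AS : Set ↥(sphere (0 : B) 1) := Subtype.val ⁻¹' A with hASdef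
  have hASc : IsClosed AS := hA.preimage continuous_subtype_val
  set toA : ↥AS → ↥A := fun y => ⟨((y : ↥(sphere (0 : B) 1)) : B), y.2⟩ with htoA
  have htoA_cont : Continuous toA :=
    (continuous_subtype_val.comp continuous_subtype_val).subtype_mk _
  set hfun : ↥AS → Fin k → ℝ := fun y => h (toA y) with hhfun
  have hfun_cont : Continuous hfun := hc.comp htoA_cont
  have hfun_ne : ∀ y, hfun y ≠ 0 := fun y => hne0 (toA y)
  set negAS : ↥AS → ↥AS := fun y => ⟨negS (y : ↥(sphere (0 : B) 1)), by
    show ((negS (y : ↥(sphere (0 : B) 1)) : ↥(sphere (0 : B) 1)) : B) ∈ A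
    exact neg_mem_of_symm hsymm y.2⟩ with hnegAS
  have hfun_neg : ∀ y, hfun (negAS y) = -hfun y := by
    intro y
    have hmem : -((toA y : ↥A) : B) ∈ A := neg_mem_of_symm hsymm y.2
    have : toA (negAS y) = ⟨-((toA y : ↥A) : B), hmem⟩ := rfl
    simp only [hhfun]
    rw [this, hoddp]
  -- the pieces
  set D : Fin k → Set ↥(sphere (0 : B) 1) :=
    fun i => Subtype.val '' {y : ↥AS | hfun y i = ‖hfun y‖} with hD
  have hDclosed : ∀ i, IsClosed (D i) := by
    intro i
    apply hASc.isClosedMap_subtype_val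
    exact isClosed_eq ((continuous_apply i).comp hfun_cont) hfun_cont.norm
  have hD_mem_pos : ∀ i (y : ↥AS), y ∈ {y : ↥AS | hfun y i = ‖hfun y‖} → 0 < hfun y i := by
    intro i y hy
    rw [hy]
    exact norm_pos_iff.2 (hfun_ne y)
  have hD_noanti : ∀ i (x x' : ↥(sphere (0 : B) 1)), x ∈ D i → x' ∈ D i →
      (x : B) = -(x' : B) → False := by
    rintro i x x' ⟨y, hy, rfl⟩ ⟨y', hy', rfl⟩ hneg
    have hyy : y = negAS y' := by
      apply Subtype.ext
      apply Subtype.ext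
      exact hneg
    rw [hyy] at hy
    have h1 : 0 < hfun (negAS y') i := hD_mem_pos i _ hy
    have h2 : 0 < hfun y' i := hD_mem_pos i _ hy'
    rw [hfun_neg y'] at h1
    simp only [Pi.neg_apply] at h1
    linarith
  set C : Fin k → Set (Proj B) := fun i => projMk '' D i with hC
  have hCclosed : ∀ i, IsClosed (C i) := by
    intro i
    exact (((hDclosed i).isCompact).image continuous_projMk).isClosed
  have hCcon : ∀ i, ContractibleIn (C i) := by
    intro i
    rcases (D i).eq_empty_or_nonempty with hDe | ⟨w, hw⟩
    · have : C i = ∅ := by rw [hC]; simp [hDe]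
      rw [this]
      exact contractibleIn_empty hProjNe
    · -- the homeomorphism between the piece and its projection
      haveI : CompactSpace ↥(D i) := isCompact_iff_compactSpace.mp (hDclosed i).isCompact
      set m₁ : ↥(D i) → ↥(C i) :=
        fun x => ⟨projMk (x : ↥(sphere (0 : B) 1)), Set.mem_image_of_mem _ x.2⟩ with hm₁
      have hm₁c : Continuous m₁ :=
        (continuous_projMk.comp continuous_subtype_val).subtype_mk _
      have hm₁bij : Function.Bijective m₁ := by
        constructor
        · intro x x' hxx
          have : projMk (x : ↥(sphere (0 : B) 1)) = projMk (x' : ↥(sphere (0 : B) 1)) :=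
            congrArg Subtype.val hxx
          rcases fiber_cases this with heq | hanti
          · exact Subtype.ext heq
          · exact absurd hanti (fun hh => hD_noanti i _ _ x.2 x'.2 hh)
        · rintro ⟨q, hq⟩
          obtain ⟨x, hx, rfl⟩ := hq
          exact ⟨⟨x, hx⟩, rfl⟩
      set eqv : ↥(D i) ≃ ↥(C i) := Equiv.ofBijective m₁ hm₁bij with heqv
      have heqvc : Continuous (eqv : ↥(D i) → ↥(C i)) := hm₁c
      set e : ↥(D i) ≃ₜ ↥(C i) := Continuous.homeoOfEquivCompactToT2 (f := eqv) heqvc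
        with he
      -- the straight-line contraction
      set g : ↥(D i) × ↥I → B := fun z => (1 - (z.2 : ℝ)) • ((z.1 : ↥(sphere (0 : B) 1)) : B)
        + (z.2 : ℝ) • ((w : ↥(sphere (0 : B) 1)) : B) with hg
      have hgc : Continuous g := by
        apply Continuous.add
        · exact ((continuous_const.sub (continuous_subtype_val.comp
            continuous_snd)).smul ((continuous_subtype_val.comp
            continuous_subtype_val).comp continuous_fst))
        · exact (continuous_subtype_val.comp continuous_snd).smul continuous_const
      have hnorm1 : ∀ x : ↥(sphere (0 : B) 1), ‖(x : B)‖ = 1 := by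
        intro x
        simpa using x.2
      have hg_ne : ∀ z, g z ≠ 0 := by
        rintro ⟨x, t⟩ hz
        simp only [hg] at hz
        have h1 : (1 - (t : ℝ)) • ((x : ↥(sphere (0 : B) 1)) : B)
            = -((t : ℝ) • ((w : ↥(sphere (0 : B) 1)) : B)) := by
          rw [← add_eq_zero_iff_eq_neg] at *
          exact hz
        have hn : |1 - (t : ℝ)| = |(t : ℝ)| := by
          have := congrArg norm h1
          rw [norm_neg, norm_smul, norm_smul, hnorm1, hnorm1, mul_one, mul_one] at this
          exact_mod_cast this
        have ht01 : 0 ≤ (t : ℝ) ∧ (t : ℝ) ≤ 1 := ⟨t.2.1, t.2.2⟩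
        have ht : (t : ℝ) = 1 / 2 := by
          rw [abs_of_nonneg (by linarith), abs_of_nonneg ht01.1] at hn
          linarith
        rw [ht] at hz
        have h2 : ((x : ↥(sphere (0 : B) 1)) : B) + ((w : ↥(sphere (0 : B) 1)) : B) = 0 := by
          have hz' : (1/2 : ℝ) • (((x : ↥(sphere (0 : B) 1)) : B)
              + ((w : ↥(sphere (0 : B) 1)) : B)) = 0 := by
            rw [smul_add]
            convert hz using 2
            norm_num
          rcases smul_eq_zero.1 hz' with h' | h'
          · norm_num at h'
          · exact h'
        have : ((x : ↥(sphere (0 : B) 1)) : B) = -((w : ↥(sphere (0 : B) 1)) : B) := by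
          rw [← add_eq_zero_iff_eq_neg] at *
          exact h2
        exact hD_noanti i _ _ x.2 hw this
      set G : ↥(D i) × ↥I → ↥(sphere (0 : B) 1) := fun z => ⟨‖g z‖⁻¹ • g z, by
        rw [mem_sphere_iff_norm, sub_zero, norm_smul, norm_inv, norm_norm,
          inv_mul_cancel₀ (norm_ne_zero_iff.2 (hg_ne z))]⟩ with hG
      have hGc : Continuous G :=
        (((hgc.norm.inv₀ (fun z => norm_ne_zero_iff.2 (hg_ne z))).smul hgc)).subtype_mk _
      refine ⟨projMk w, ⟨fun z => projMk (G (e.symm z.1, z.2)),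
        continuous_projMk.comp (hGc.comp ((e.symm.continuous.comp
          continuous_fst).prodMk continuous_snd))⟩, ?_, ?_⟩
      · intro x
        show projMk (G (e.symm x, 0)) = (x : Proj B)
        have hG0 : G (e.symm x, 0) = ((e.symm x : ↥(D i)) : ↥(sphere (0 : B) 1)) := by
          apply Subtype.ext
          show ‖g (e.symm x, 0)‖⁻¹ • g (e.symm x, 0) = _
          have hg0 : g (e.symm x, 0) = ((e.symm x : ↥(D i)) : ↥(sphere (0 : B) 1)) := by
            simp only [hg]
            show ((1 : ℝ) - ((0 : ↥I) : ℝ)) • _ + ((0 : ↥I) : ℝ) • _ = _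
            norm_num
          rw [hg0, hnorm1]
          norm_num
        rw [hG0]
        have : m₁ (e.symm x) = x := e.apply_symm_apply x
        exact congrArg Subtype.val this
      · intro x
        show projMk (G (e.symm x, 1)) = projMk w
        have hG1 : G (e.symm x, 1) = w := by
          apply Subtype.ext
          show ‖g (e.symm x, 1)‖⁻¹ • g (e.symm x, 1) = _
          have hg1 : g (e.symm x, 1) = ((w : ↥(sphere (0 : B) 1)) : B) := by
            simp only [hg]
            show ((1 : ℝ) - ((1 : ↥I) : ℝ)) • _ + ((1 : ↥I) : ℝ) • _ = _
            norm_num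
          rw [hg1, hnorm1]
          norm_num
        rw [hG1]
  refine ⟨C, hCclosed, hCcon, ?_⟩
  rintro p ⟨x, hxA, rfl⟩
  set y : ↥AS := ⟨x, hxA⟩ with hy
  have hk : k ≠ 0 := by
    intro hk0
    apply hfun_ne y
    subst hk0
    funext i
    exact i.elim0
  haveI : Nonempty (Fin k) := ⟨⟨0, Nat.pos_of_ne_zero hk⟩⟩
  obtain ⟨i, _, hi⟩ := Finset.exists_max_image Finset.univ (fun j => |hfun y j|)
    ⟨Classical.arbitrary (Fin k), Finset.mem_univ _⟩
  have hnorm_eq : ‖hfun y‖ = |hfun y i| := by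
    apply le_antisymm
    · rw [pi_norm_le_iff_of_nonneg (abs_nonneg _)]
      intro j
      exact hi j (Finset.mem_univ j)
    · exact (norm_le_pi_norm (hfun y) i)
  rcases le_or_gt 0 (hfun y i) with hpos | hneg
  · have hmem : y ∈ {y : ↥AS | hfun y i = ‖hfun y‖} := by
      rw [Set.mem_setOf_eq, hnorm_eq, abs_of_nonneg hpos]
    exact Set.mem_iUnion.2 ⟨i, ⟨x, ⟨y, hmem, rfl⟩, rfl⟩⟩
  · have hmem : negAS y ∈ {y : ↥AS | hfun y i = ‖hfun y‖} := by
      rw [Set.mem_setOf_eq, hfun_neg]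
      simp only [Pi.neg_apply, norm_neg]
      rw [hnorm_eq, abs_of_neg hneg]
    refine Set.mem_iUnion.2 ⟨i, ⟨negS x, ⟨negAS y, hmem, rfl⟩, projMk_negS x⟩⟩

end Aux

/-- For a closed symmetric subset `A` of the unit sphere of a finite-dimensional Banach
space, the Krasnoselskii genus of `A` equals the Lusternik–Schnirelmann subspace category
of `A/ℤ₂` inside `S/ℤ₂`. -/
theorem genus_eq_catLS_quotient [CompleteSpace B] [FiniteDimensional ℝ B]
    (A : Set B) (hAS : A ⊆ sphere (0 : B) 1) (hA : IsClosed A) (hsymm : A = -A) :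
    genus A =
      catLS {p : Proj B | ∃ x : ↥(sphere (0 : B) 1), (x : B) ∈ A ∧
        Quotient.mk (projSetoid B) x = p} := by
  by_cases hAe : A = ∅
  · subst hAe
    have hT : {p : Proj B | ∃ x : ↥(sphere (0 : B) 1), (x : B) ∈ (∅ : Set B) ∧
        Quotient.mk (projSetoid B) x = p} = ∅ := by
      ext p
      simp
    rw [genus, if_pos rfl, hT]
    symm
    apply le_antisymm _ zero_le
    apply sInf_le
    exact ⟨0, by simp, fun i => i.elim0, fun i => i.elim0, fun i => i.elim0,
      by simp⟩
  · have hne : A.Nonempty := Set.nonempty_iff_ne_empty.2 hAe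
    rw [genus, if_neg hAe, catLS]
    congr 1
    ext m
    simp only [Set.mem_setOf_eq]
    constructor
    · rintro ⟨k, rfl, hodd⟩
      obtain ⟨C, h1, h2, h3⟩ := cover_of_hasOddMap A hAS hA hsymm hne k hodd
      exact ⟨k, rfl, C, h1, h2, h3⟩
    · rintro ⟨k, rfl, C, h1, h2, h3⟩
      exact ⟨k, rfl, hasOddMap_of_cover A hAS hA hsymm k C h1 h2 h3⟩

end
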